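/- (Patterson) For every N ≥ 1 and all subsets A, B of ℤ_N: A and B are homometric if and only if their complements Aᶜ = ℤ_N \ A and Bᶜ = ℤ_N \ B are homometric. That is, iv(A) = iv(B) if and only if iv(Aᶜ) = iv(Bᶜ). -/
import Mathlib


/-- The interval vector of a finite subset `A` of `ℤ_N`:
`iv A n = #{(a, b) ∈ A × A : b - a = n}`. -/
def iv {N : ℕ} (A : Finset (ZMod N)) (n : ZMod N) : ℕ :=
  ((A ×ˢ A).filter (fun p => p.2 - p.1 = n)).card

lemma iv_eq {N : ℕ} [NeZero N] (A : Finset (ZMod N)) (n : ZMod N) :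
    iv A n = (Finset.univ.filter fun a => a ∈ A ∧ a + n ∈ A).card := by
  unfold iv
  apply Finset.card_bij (fun p _ => p.1)
  · intro p hp
    simp only [Finset.mem_filter, Finset.mem_product] at hp ⊢
    obtain ⟨⟨h1, h2⟩, h3⟩ := hp
    refine ⟨Finset.mem_univ _, h1, ?_⟩
    rw [← h3]
    simpa using h2
  · intro p hp q hq h
    simp only [Finset.mem_filter, Finset.mem_product] at hp hq
    have : p.2 = q.2 := by
      have e1 : p.2 = p.1 + n := by rw [← hp.2]; ring
      have e2 : q.2 = q.1 + n := by rw [← hq.2]; ring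
      rw [e1, e2, h]
    exact Prod.ext h this
  · intro a ha
    simp only [Finset.mem_filter, Finset.mem_univ, true_and] at ha
    exact ⟨(a, a + n), by simp [Finset.mem_filter, Finset.mem_product, ha.1, ha.2], rfl⟩

lemma iv_zero {N : ℕ} [NeZero N] (A : Finset (ZMod N)) : iv A 0 = A.card := by
  rw [iv_eq]
  congr 1
  simp [Finset.filter_mem_eq_inter]

lemma iv_key {N : ℕ} [NeZero N] (A : Finset (ZMod N)) (n : ZMod N) :
    iv Aᶜ n + 2 * A.card = iv A n + N := by
  rw [iv_eq, iv_eq]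
  have hshift : (Finset.univ.filter fun a : ZMod N => a + n ∈ A).card = A.card := by
    apply Finset.card_bij (fun a _ => a + n)
    · intro a ha; simpa using ha
    · intro a _ b _ h; exact add_right_cancel h
    · intro b hb
      exact ⟨b - n, by simpa using hb, by ring⟩
  have hA : A.card = (Finset.univ.filter fun a : ZMod N => a ∈ A).card := by
    congr 1; simp [Finset.filter_mem_eq_inter]
  have hsum : ∀ a : ZMod N,
      ((if a ∈ Aᶜ ∧ a + n ∈ Aᶜ then 1 else 0) +
        ((if a ∈ A then 1 else 0) + (if a + n ∈ A then 1 else 0)))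
      = (if a ∈ A ∧ a + n ∈ A then (1:ℕ) else 0) + 1 := by
    intro a
    by_cases h1 : a ∈ A <;> by_cases h2 : a + n ∈ A <;>
      simp [h1, h2, Finset.mem_compl]
  calc (Finset.univ.filter fun a => a ∈ Aᶜ ∧ a + n ∈ Aᶜ).card + 2 * A.card
      = ∑ a : ZMod N, ((if a ∈ Aᶜ ∧ a + n ∈ Aᶜ then 1 else 0) +
          ((if a ∈ A then 1 else 0) + (if a + n ∈ A then 1 else 0))) := by
        rw [Finset.sum_add_distrib, Finset.sum_add_distrib,
          ← Finset.card_filter, ← Finset.card_filter, ← Finset.card_filter,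
          hshift, ← hA]
        ring
    _ = ∑ a : ZMod N, ((if a ∈ A ∧ a + n ∈ A then (1:ℕ) else 0) + 1) := by
        exact Finset.sum_congr rfl (fun a _ => hsum a)
    _ = (Finset.univ.filter fun a => a ∈ A ∧ a + n ∈ A).card + N := by
        rw [Finset.sum_add_distrib, ← Finset.card_filter]
        simp [Finset.card_univ, ZMod.card]

/-- (Patterson) `A` and `B` are homometric iff their complements are. -/
theorem homometric_iff_compl_homometric (N : ℕ) [NeZero N]
    (A B : Finset (ZMod N)) :
    iv A = iv B ↔ iv Aᶜ = iv Bᶜ := by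
  constructor
  · intro h
    have hcard : A.card = B.card := by
      rw [← iv_zero A, ← iv_zero B, h]
    funext n
    have h1 := iv_key A n
    have h2 := iv_key B n
    have := congrFun h n
    omega
  · intro h
    have hcard : Aᶜ.card = Bᶜ.card := by
      rw [← iv_zero Aᶜ, ← iv_zero Bᶜ, h]
    funext n
    have h1 := iv_key Aᶜ n
    have h2 := iv_key Bᶜ n
    rw [compl_compl] at h1 h2
    have := congrFun h n
    omega
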